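/- arXiv:1011.0721 — 3 statements merged into one kernel-verified Lean document; each statement's English description precedes it below -/
import Mathlib

section
/- Let P, C : ℝ → M_n(ℂ) be differentiable families of matrices such that for every u: P(u)·P(u) = P(u) and P(u)·C(u) = C(u)·P(u) = 0. Then for every u and every ε ∈ ℝ: trace(P′(u)·exp(−ε²·C(u)²)) = 0, where exp is the matrix exponential. -/
open NormedSpace

lemma exp_mul_eq_self_of_mul_eq_zero {n : ℕ} (A B : Matrix (Fin n) (Fin n) ℂ)
    (h : A * B = 0) : exp A * B = B := by
  letI : SeminormedRing (Matrix (Fin n) (Fin n) ℂ) := Matrix.linftyOpSemiNormedRing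
  letI : NormedRing (Matrix (Fin n) (Fin n) ℂ) := Matrix.linftyOpNormedRing
  letI : NormedAlgebra ℂ (Matrix (Fin n) (Fin n) ℂ) := Matrix.linftyOpNormedAlgebra
  rw [exp_eq_tsum (𝕂 := ℂ)]; beta_reduce; erw [← Summable.tsum_mul_right B (expSeries_summable' (𝕂 := ℂ) A)]
  rw [tsum_eq_single 0]
  · simp
  · intro k hk
    obtain ⟨j, rfl⟩ := Nat.exists_eq_succ_of_ne_zero hk
    rw [smul_mul_assoc, pow_succ, mul_assoc, h, mul_zero, smul_zero]

lemma mul_exp_eq_self_of_mul_eq_zero {n : ℕ} (A B : Matrix (Fin n) (Fin n) ℂ)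
    (h : B * A = 0) : B * exp A = B := by
  letI : SeminormedRing (Matrix (Fin n) (Fin n) ℂ) := Matrix.linftyOpSemiNormedRing
  letI : NormedRing (Matrix (Fin n) (Fin n) ℂ) := Matrix.linftyOpNormedRing
  letI : NormedAlgebra ℂ (Matrix (Fin n) (Fin n) ℂ) := Matrix.linftyOpNormedAlgebra
  rw [exp_eq_tsum (𝕂 := ℂ)]; beta_reduce; erw [← Summable.tsum_mul_left B (expSeries_summable' (𝕂 := ℂ) A)]
  rw [tsum_eq_single 0]
  · simp
  · intro k hk
    obtain ⟨j, rfl⟩ := Nat.exists_eq_succ_of_ne_zero hk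
    rw [mul_smul_comm, pow_succ', ← mul_assoc, h, zero_mul, smul_zero]

/-- If `P, C : ℝ → M_n(ℂ)` are differentiable families of matrices with
`P(u)² = P(u)` and `P(u)·C(u) = C(u)·P(u) = 0` for all `u`, then for every `u` and
every `ε ∈ ℝ`, `trace(P′(u)·exp(−ε²·C(u)²)) = 0`, where `exp` is the matrix
exponential and `P′` is the entrywise derivative. -/
theorem trace_proj_deriv_exp_eq_zero {n : ℕ}
    (P P' C C' : ℝ → Matrix (Fin n) (Fin n) ℂ)
    (hPderiv : ∀ u i j, HasDerivAt (fun v => P v i j) (P' u i j) u)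
    (hCderiv : ∀ u i j, HasDerivAt (fun v => C v i j) (C' u i j) u)
    (hidem : ∀ u, P u * P u = P u)
    (hPC : ∀ u, P u * C u = 0) (hCP : ∀ u, C u * P u = 0) (u : ℝ) (ε : ℝ) :
    (P' u * exp ((-(ε : ℂ) ^ 2) • (C u * C u))).trace = 0 := by
  set A : Matrix (Fin n) (Fin n) ℂ := (-(ε : ℂ) ^ 2) • (C u * C u) with hA
  -- P u * A = 0 and A * P u = 0
  have hPA : P u * A = 0 := by
    rw [hA, mul_smul_comm, ← mul_assoc, hPC u, zero_mul, smul_zero]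
  have hAP : A * P u = 0 := by
    rw [hA, smul_mul_assoc, mul_assoc, hCP u, mul_zero, smul_zero]
  have hexpP : exp A * P u = P u := exp_mul_eq_self_of_mul_eq_zero A (P u) hAP
  have hPexp : P u * exp A = P u := mul_exp_eq_self_of_mul_eq_zero A (P u) hPA
  -- P' u = P' u * P u + P u * P' u
  have hP' : P' u = P' u * P u + P u * P' u := by
    ext i j
    have h1 : HasDerivAt (fun v => (P v * P v) i j)
        ((P' u * P u + P u * P' u) i j) u := by
      simp only [Matrix.mul_apply, Matrix.add_apply]
      rw [← Finset.sum_add_distrib]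
      exact HasDerivAt.fun_sum fun k _ => ((hPderiv u i k).mul (hPderiv u k j))
    have h2 : HasDerivAt (fun v => (P v * P v) i j) (P' u i j) u := by
      have := hPderiv u i j
      refine this.congr_of_eventuallyEq ?_
      filter_upwards with v
      rw [hidem v]
    exact (h2.unique h1)
  -- P u * (P' u * P u) = 0
  have hPP'P : P u * (P' u * P u) = 0 := by
    have h : P u * P' u = P u * (P' u * P u) + P u * P' u := by
      conv_lhs => rw [hP']
      rw [mul_add, ← mul_assoc (P u) (P u), hidem u]
    exact right_eq_add.mp h
  have key1 : P' u * P u * exp A = P' u * P u := by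
    rw [mul_assoc, hPexp]
  have key2 : (P u * P' u * exp A).trace = (P u * P' u).trace := by
    rw [Matrix.trace_mul_comm, ← mul_assoc, hexpP]
  have tr1 : (P' u * P u).trace = 0 := by
    have : P' u * P u = P' u * P u * P u := by rw [mul_assoc, hidem u]
    rw [this, Matrix.trace_mul_comm, hPP'P, Matrix.trace_zero]
  have tr2 : (P u * P' u).trace = 0 := by
    rw [Matrix.trace_mul_comm]; exact tr1
  calc (P' u * exp A).trace
      = ((P' u * P u + P u * P' u) * exp A).trace := by rw [← hP']
    _ = (P' u * P u * exp A).trace + (P u * P' u * exp A).trace := by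
        rw [add_mul, Matrix.trace_add]
    _ = 0 := by rw [key1, key2, tr1, tr2, add_zero]
end

section
/- Let H be a complex Hilbert space, D : H → H a bounded self-adjoint operator, g : H → H a unitary operator, and λ > 0 a real number such that ‖D x‖ ≥ λ‖x‖ for all x ∈ H. For u ∈ [0, 1] set D_u = (1 − u)·D + u·g⁻¹∘D∘g. Then for every u ∈ [0, 1] and every x ∈ H: ‖D_u x‖ ≥ (λ − min(u, 1 − u)·‖D∘g − g∘D‖)·‖x‖. Moreover, if ‖D∘g − g∘D‖ < λ, then D_u is bijective for every u ∈ [0, 1]. -/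
open ContinuousLinearMap

/-- Let `D` be a bounded self-adjoint operator on a complex Hilbert space `H`,
`g` a unitary operator and `λ > 0` with `‖D x‖ ≥ λ‖x‖` for all `x`.  Setting
`D_u = (1 − u)·D + u·g⁻¹∘D∘g` (with `g⁻¹ = g* = star g`), we have
`‖D_u x‖ ≥ (λ − min(u, 1 − u)·‖D∘g − g∘D‖)·‖x‖` for every `u ∈ [0,1]` and `x ∈ H`;
moreover if `‖D∘g − g∘D‖ < λ` then `D_u` is bijective for every `u ∈ [0,1]`. -/
theorem lower_bound_and_bijective_of_path {H : Type*} [NormedAddCommGroup H]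
    [InnerProductSpace ℂ H] [CompleteSpace H]
    (D g : H →L[ℂ] H) (hD : IsSelfAdjoint D) (hg : g ∈ unitary (H →L[ℂ] H))
    (lam : ℝ) (hlam : 0 < lam) (hDlow : ∀ x : H, lam * ‖x‖ ≤ ‖D x‖)
    (Du : ℝ → H →L[ℂ] H)
    (hDu : ∀ u : ℝ, Du u = (1 - u) • D + u • (star g ∘L D ∘L g)) :
    (∀ u ∈ Set.Icc (0 : ℝ) 1, ∀ x : H,
      (lam - min u (1 - u) * ‖D ∘L g - g ∘L D‖) * ‖x‖ ≤ ‖Du u x‖) ∧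
    (‖D ∘L g - g ∘L D‖ < lam →
      ∀ u ∈ Set.Icc (0 : ℝ) 1, Function.Bijective (Du u)) := by
  set C : H →L[ℂ] H := D ∘L g - g ∘L D with hC
  -- basic facts about the unitary `g`
  have hsg : ∀ z : H, star g (g z) = z := by
    intro z
    have h1 : star g * g = 1 := (Unitary.mem_iff.mp hg).1
    have := DFunLike.congr_fun h1 z
    simpa [ContinuousLinearMap.mul_apply] using this
  have hng : ∀ z : H, ‖g z‖ = ‖z‖ := fun z => norm_map_of_mem_unitary hg z
  have hnsg : ∀ z : H, ‖star g z‖ = ‖z‖ := fun z =>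
    norm_map_of_mem_unitary (Unitary.star_mem hg) z
  -- pointwise identities
  have e1 : ∀ u : ℝ, ∀ x : H, Du u x = D x + u • star g (C x) := by
    intro u x
    rw [hDu]
    simp only [hC, ContinuousLinearMap.add_apply, ContinuousLinearMap.smul_apply,
      ContinuousLinearMap.coe_comp', Function.comp_apply, ContinuousLinearMap.coe_sub',
      Pi.sub_apply, map_sub, hsg, smul_sub, sub_smul, one_smul]
    abel
  have e2 : ∀ u : ℝ, ∀ x : H, Du u x = star g (D (g x)) - (1 - u) • star g (C x) := by
    intro u x
    rw [hDu]
    simp only [hC, ContinuousLinearMap.add_apply, ContinuousLinearMap.smul_apply,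
      ContinuousLinearMap.coe_comp', Function.comp_apply, ContinuousLinearMap.coe_sub',
      Pi.sub_apply, map_sub, hsg, smul_sub, sub_smul, one_smul]
    abel
  -- main lower bound
  have key : ∀ u ∈ Set.Icc (0 : ℝ) 1, ∀ x : H,
      (lam - min u (1 - u) * ‖C‖) * ‖x‖ ≤ ‖Du u x‖ := by
    rintro u ⟨hu0, hu1⟩ x
    have hCx : ‖C x‖ ≤ ‖C‖ * ‖x‖ := C.le_opNorm x
    have hCx0 : (0 : ℝ) ≤ ‖C x‖ := norm_nonneg _
    -- bound 1: ‖Du u x‖ ≥ ‖D x‖ - u ‖C x‖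
    have b1 : lam * ‖x‖ - u * (‖C‖ * ‖x‖) ≤ ‖Du u x‖ := by
      have h1 : ‖D x‖ ≤ ‖Du u x‖ + ‖u • star g (C x)‖ := by
        calc ‖D x‖ = ‖(D x + u • star g (C x)) - u • star g (C x)‖ := by
              rw [add_sub_cancel_right]
        _ ≤ ‖D x + u • star g (C x)‖ + ‖u • star g (C x)‖ := norm_sub_le _ _
        _ = ‖Du u x‖ + ‖u • star g (C x)‖ := by rw [← e1]
      have h2 : ‖u • star g (C x)‖ = u * ‖C x‖ := by
        rw [norm_smul, hnsg, Real.norm_eq_abs, abs_of_nonneg hu0]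
      have h3 : u * ‖C x‖ ≤ u * (‖C‖ * ‖x‖) := mul_le_mul_of_nonneg_left hCx hu0
      have h4 := hDlow x
      linarith
    -- bound 2: ‖Du u x‖ ≥ lam ‖x‖ - (1-u) ‖C x‖
    have b2 : lam * ‖x‖ - (1 - u) * (‖C‖ * ‖x‖) ≤ ‖Du u x‖ := by
      have h1 : ‖star g (D (g x))‖ ≤ ‖Du u x‖ + ‖(1 - u) • star g (C x)‖ := by
        calc ‖star g (D (g x))‖
            = ‖(star g (D (g x)) - (1 - u) • star g (C x)) + (1 - u) • star g (C x)‖ := by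
              rw [sub_add_cancel]
        _ ≤ ‖star g (D (g x)) - (1 - u) • star g (C x)‖ + ‖(1 - u) • star g (C x)‖ :=
              norm_add_le _ _
        _ = ‖Du u x‖ + ‖(1 - u) • star g (C x)‖ := by rw [← e2]
      have h2 : ‖(1 - u) • star g (C x)‖ = (1 - u) * ‖C x‖ := by
        rw [norm_smul, hnsg, Real.norm_eq_abs, abs_of_nonneg (by linarith)]
      have h3 : (1 - u) * ‖C x‖ ≤ (1 - u) * (‖C‖ * ‖x‖) :=
        mul_le_mul_of_nonneg_left hCx (by linarith)
      have h4 : lam * ‖x‖ ≤ ‖star g (D (g x))‖ := by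
        rw [hnsg]
        calc lam * ‖x‖ = lam * ‖g x‖ := by rw [hng]
        _ ≤ ‖D (g x)‖ := hDlow (g x)
      linarith
    rcases le_total u (1 - u) with h | h
    · rw [min_eq_left h]; linarith
    · rw [min_eq_right h]; linarith
  refine ⟨key, ?_⟩
  intro hflat u hu
  obtain ⟨hu0, hu1⟩ := hu
  have hC0 : (0 : ℝ) ≤ ‖C‖ := norm_nonneg _
  have hmin0 : 0 ≤ min u (1 - u) := le_min hu0 (by linarith)
  have hmin1 : min u (1 - u) ≤ 1 := le_trans (min_le_left _ _) hu1
  set c : ℝ := lam - min u (1 - u) * ‖C‖ with hc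
  have hcpos : 0 < c := by
    have : min u (1 - u) * ‖C‖ ≤ 1 * ‖C‖ := mul_le_mul_of_nonneg_right hmin1 hC0
    rw [one_mul] at this
    simp only [hc]
    linarith
  have hbound : ∀ x : H, c * ‖x‖ ≤ ‖Du u x‖ := key u ⟨hu0, hu1⟩
  -- antilipschitz, hence injective with closed range
  have hanti : AntilipschitzWith ⟨c⁻¹, le_of_lt (by positivity)⟩ (Du u) := by
    apply (Du u).antilipschitz_of_bound
    intro x
    change ‖x‖ ≤ c⁻¹ * ‖Du u x‖
    rw [inv_mul_eq_div, le_div_iff₀ hcpos, mul_comm]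
    exact hbound x
  have hinj : Function.Injective (Du u) := hanti.injective
  -- self-adjointness of `Du u`
  have hsa : IsSelfAdjoint (Du u) := by
    rw [hDu]
    have h1 : IsSelfAdjoint (star g ∘L D ∘L g) := by
      have := hD.conjugate' g
      simp [ContinuousLinearMap.mul_def, ContinuousLinearMap.comp_assoc] at this; exact this
    exact ((IsSelfAdjoint.all (1 - u)).smul hD).add ((IsSelfAdjoint.all u).smul h1)
  -- surjectivity via closed range + trivial orthogonal complement
  have hclosed : IsClosed (Set.range (Du u)) :=
    hanti.isClosed_range (Du u).uniformContinuous
  set K : Submodule ℂ H := LinearMap.range (Du u : H →ₗ[ℂ] H) with hK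
  have hKclosed : IsClosed (K : Set H) := by
    rw [hK, LinearMap.coe_range]; exact hclosed
  haveI : CompleteSpace K := hKclosed.completeSpace_coe
  have hKbot : Kᗮ = ⊥ := by
    rw [Submodule.eq_bot_iff]
    intro y hy
    have hy' : ∀ x : H, inner ℂ (Du u x) y = (0 : ℂ) := fun x =>
      (Submodule.mem_orthogonal K y).mp hy (Du u x) (LinearMap.mem_range_self _ x)
    have hTy : Du u y = 0 := by
      have h := hy' (Du u y)
      have hsym := hsa.isSymmetric (Du u y) y
      simp only [ContinuousLinearMap.coe_coe] at hsym
      rw [hsym] at h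
      exact inner_self_eq_zero.mp h
    have : Du u y = Du u 0 := by rw [hTy, map_zero]
    exact hinj this
  have hKtop : K = ⊤ := Submodule.orthogonal_eq_bot_iff.mp hKbot
  have hsurj : Function.Surjective (Du u) := by
    intro z
    have hz : z ∈ K := hKtop ▸ Submodule.mem_top
    obtain ⟨x, hx⟩ := hz
    exact ⟨x, hx⟩
  exact ⟨hinj, hsurj⟩
end

section
/- Let A be a Banach algebra. Let a, b : (−∞, 0] → A be given by a(x) = a_c + e^x·a_∞(x) and b(x) = b_c + e^x·b_∞(x), where a_c, b_c ∈ A are constants and a_∞, b_∞ : (−∞, 0] → A are differentiable with a_∞, a_∞′, b_∞, b_∞′ bounded. For a function f : (−∞, 0] → A set ‖f‖₁ = sup_{x ≤ 0} ‖f(x)‖ + sup_{x ≤ 0} ‖f′(x)‖, and define the b-norm ᵇ‖a‖ = ‖a‖₁ + 2‖a_∞‖₁. Then the pointwise product satisfies (a·b)(x) = a_c·b_c + e^x·(ab)_∞(x) with (ab)_∞(x) = a_c·b_∞(x) + a_∞(x)·b_c + e^x·a_∞(x)·b_∞(x), and ᵇ‖a·b‖ ≤ ᵇ‖a‖ ·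 ᵇ‖b‖, i.e. ‖a·b‖₁ + 2‖(ab)_∞‖₁ ≤ (‖a‖₁ + 2‖a_∞‖₁)·(‖b‖₁ + 2‖b_∞‖₁). -/
open Set Filter

/-- The C¹-norm of a function on `(−∞, 0]` with values in a Banach algebra,
given together with its derivative function:
`‖f‖₁ = sup_{x ≤ 0} ‖f(x)‖ + sup_{x ≤ 0} ‖f′(x)‖`. -/
noncomputable def C1NormIic {A : Type*} [NormedRing A] (f f' : ℝ → A) : ℝ :=
  (⨆ x : Iic (0 : ℝ), ‖f x‖) + ⨆ x : Iic (0 : ℝ), ‖f' x‖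

set_option maxHeartbeats 1600000

/-- Multiplicativity of the b-norm `ᵇ‖a‖ = ‖a‖₁ + 2‖a_∞‖₁` on functions
`a(x) = a_c + e^x·a_∞(x)` on the cylindrical end `(−∞, 0]` with values in a Banach
algebra `A`: the pointwise product satisfies
`(a·b)(x) = a_c·b_c + e^x·(ab)_∞(x)` with
`(ab)_∞ = a_c·b_∞ + a_∞·b_c + e^x·a_∞·b_∞`, and
`‖a·b‖₁ + 2‖(ab)_∞‖₁ ≤ (‖a‖₁ + 2‖a_∞‖₁)·(‖b‖₁ + 2‖b_∞‖₁)`. -/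
theorem bNorm_multiplicative {A : Type*} [NormedRing A] [NormedAlgebra ℝ A]
    [CompleteSpace A]
    (ac bc : A) (ainf ainf' binf binf' : ℝ → A)
    (hainf : ∀ x ≤ (0 : ℝ), HasDerivWithinAt ainf (ainf' x) (Iic 0) x)
    (hbinf : ∀ x ≤ (0 : ℝ), HasDerivWithinAt binf (binf' x) (Iic 0) x)
    (hb1 : BddAbove (range fun x : Iic (0 : ℝ) => ‖ainf x‖))
    (hb2 : BddAbove (range fun x : Iic (0 : ℝ) => ‖ainf' x‖))
    (hb3 : BddAbove (range fun x : Iic (0 : ℝ) => ‖binf x‖))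
    (hb4 : BddAbove (range fun x : Iic (0 : ℝ) => ‖binf' x‖))
    (a b a' b' abinf abinf' ab' : ℝ → A)
    (ha : a = fun x => ac + Real.exp x • ainf x)
    (hb : b = fun x => bc + Real.exp x • binf x)
    (ha' : a' = fun x => Real.exp x • ainf x + Real.exp x • ainf' x)
    (hb' : b' = fun x => Real.exp x • binf x + Real.exp x • binf' x)
    (habinf : abinf = fun x =>
      ac * binf x + ainf x * bc + Real.exp x • (ainf x * binf x))
    (habinf' : abinf' = fun x =>
      ac * binf' x + ainf' x * bc + Real.exp x • (ainf x * binf x)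
        + Real.exp x • (ainf' x * binf x + ainf x * binf' x))
    (hab' : ab' = fun x => a' x * b x + a x * b' x) :
    (∀ x : ℝ, a x * b x = ac * bc + Real.exp x • abinf x) ∧
    C1NormIic (fun x => a x * b x) ab' + 2 * C1NormIic abinf abinf' ≤
      (C1NormIic a a' + 2 * C1NormIic ainf ainf') *
        (C1NormIic b b' + 2 * C1NormIic binf binf') := by
  haveI : Nonempty (Iic (0:ℝ)) := ⟨⟨0, mem_Iic.mpr le_rfl⟩⟩
  constructor
  · intro x
    simp only [ha, hb, habinf]
    simp only [mul_add, add_mul, smul_add, smul_smul, mul_smul_comm, smul_mul_assoc]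
    abel
  -- abbreviations for the sups
  set P0 := ⨆ x : Iic (0:ℝ), ‖ainf x‖ with hP0def
  set P1 := ⨆ x : Iic (0:ℝ), ‖ainf' x‖ with hP1def
  set Q0 := ⨆ x : Iic (0:ℝ), ‖binf x‖ with hQ0def
  set Q1 := ⨆ x : Iic (0:ℝ), ‖binf' x‖ with hQ1def
  have hP0 : ∀ x : Iic (0:ℝ), ‖ainf x‖ ≤ P0 := fun x => le_ciSup hb1 x
  have hP1 : ∀ x : Iic (0:ℝ), ‖ainf' x‖ ≤ P1 := fun x => le_ciSup hb2 x
  have hQ0 : ∀ x : Iic (0:ℝ), ‖binf x‖ ≤ Q0 := fun x => le_ciSup hb3 x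
  have hQ1 : ∀ x : Iic (0:ℝ), ‖binf' x‖ ≤ Q1 := fun x => le_ciSup hb4 x
  have hP0n : 0 ≤ P0 := Real.iSup_nonneg fun x => norm_nonneg _
  have hP1n : 0 ≤ P1 := Real.iSup_nonneg fun x => norm_nonneg _
  have hQ0n : 0 ≤ Q0 := Real.iSup_nonneg fun x => norm_nonneg _
  have hQ1n : 0 ≤ Q1 := Real.iSup_nonneg fun x => norm_nonneg _
  have he1 : ∀ x : Iic (0:ℝ), Real.exp x.1 ≤ 1 := fun x => by
    calc Real.exp x.1 ≤ Real.exp 0 := Real.exp_le_exp.mpr x.2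
    _ = 1 := Real.exp_zero
  have he0 : ∀ t : ℝ, (0:ℝ) ≤ Real.exp t := fun t => (Real.exp_pos t).le
  have hnexp : ∀ t : ℝ, ‖Real.exp t‖ = Real.exp t := fun t => by
    rw [Real.norm_eq_abs, abs_of_pos (Real.exp_pos t)]
  -- pointwise bounds for a, a', b, b'
  have hab0 : ∀ x : Iic (0:ℝ), ‖a x‖ ≤ ‖ac‖ + P0 := by
    intro x
    rw [ha]
    calc ‖ac + Real.exp x.1 • ainf x‖ ≤ ‖ac‖ + ‖Real.exp x.1 • ainf x‖ := norm_add_le _ _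
    _ = ‖ac‖ + Real.exp x.1 * ‖ainf x‖ := by rw [norm_smul, hnexp]
    _ ≤ ‖ac‖ + 1 * P0 := by
        gcongr
        · exact he1 x
        · exact hP0 x
    _ = ‖ac‖ + P0 := by ring
  have hab1 : ∀ x : Iic (0:ℝ), ‖a' x‖ ≤ P0 + P1 := by
    intro x
    rw [ha']
    calc ‖Real.exp x.1 • ainf x + Real.exp x.1 • ainf' x‖
        ≤ ‖Real.exp x.1 • ainf x‖ + ‖Real.exp x.1 • ainf' x‖ := norm_add_le _ _
    _ = Real.exp x.1 * ‖ainf x‖ + Real.exp x.1 * ‖ainf' x‖ := by rw [norm_smul, norm_smul, hnexp]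
    _ ≤ 1 * P0 + 1 * P1 := by
        gcongr
        · exact he1 x
        · exact hP0 x
        · exact he1 x
        · exact hP1 x
    _ = P0 + P1 := by ring
  have hbb0 : ∀ x : Iic (0:ℝ), ‖b x‖ ≤ ‖bc‖ + Q0 := by
    intro x
    rw [hb]
    calc ‖bc + Real.exp x.1 • binf x‖ ≤ ‖bc‖ + ‖Real.exp x.1 • binf x‖ := norm_add_le _ _
    _ = ‖bc‖ + Real.exp x.1 * ‖binf x‖ := by rw [norm_smul, hnexp]
    _ ≤ ‖bc‖ + 1 * Q0 := by
        gcongr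
        · exact he1 x
        · exact hQ0 x
    _ = ‖bc‖ + Q0 := by ring
  have hbb1 : ∀ x : Iic (0:ℝ), ‖b' x‖ ≤ Q0 + Q1 := by
    intro x
    rw [hb']
    calc ‖Real.exp x.1 • binf x + Real.exp x.1 • binf' x‖
        ≤ ‖Real.exp x.1 • binf x‖ + ‖Real.exp x.1 • binf' x‖ := norm_add_le _ _
    _ = Real.exp x.1 * ‖binf x‖ + Real.exp x.1 * ‖binf' x‖ := by rw [norm_smul, norm_smul, hnexp]
    _ ≤ 1 * Q0 + 1 * Q1 := by
        gcongr
        · exact he1 x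
        · exact hQ0 x
        · exact he1 x
        · exact hQ1 x
    _ = Q0 + Q1 := by ring
  have hbdda : BddAbove (range fun x : Iic (0:ℝ) => ‖a x‖) :=
    ⟨‖ac‖ + P0, by rintro _ ⟨x, rfl⟩; exact hab0 x⟩
  have hbdda' : BddAbove (range fun x : Iic (0:ℝ) => ‖a' x‖) :=
    ⟨P0 + P1, by rintro _ ⟨x, rfl⟩; exact hab1 x⟩
  have hbddb : BddAbove (range fun x : Iic (0:ℝ) => ‖b x‖) :=
    ⟨‖bc‖ + Q0, by rintro _ ⟨x, rfl⟩; exact hbb0 x⟩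
  have hbddb' : BddAbove (range fun x : Iic (0:ℝ) => ‖b' x‖) :=
    ⟨Q0 + Q1, by rintro _ ⟨x, rfl⟩; exact hbb1 x⟩
  set A0 := ⨆ x : Iic (0:ℝ), ‖a x‖ with hA0def
  set A1 := ⨆ x : Iic (0:ℝ), ‖a' x‖ with hA1def
  set B0 := ⨆ x : Iic (0:ℝ), ‖b x‖ with hB0def
  set B1 := ⨆ x : Iic (0:ℝ), ‖b' x‖ with hB1def
  have hA0 : ∀ x : Iic (0:ℝ), ‖a x‖ ≤ A0 := fun x => le_ciSup hbdda x
  have hA1 : ∀ x : Iic (0:ℝ), ‖a' x‖ ≤ A1 := fun x => le_ciSup hbdda' x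
  have hB0 : ∀ x : Iic (0:ℝ), ‖b x‖ ≤ B0 := fun x => le_ciSup hbddb x
  have hB1 : ∀ x : Iic (0:ℝ), ‖b' x‖ ≤ B1 := fun x => le_ciSup hbddb' x
  have hA0n : 0 ≤ A0 := Real.iSup_nonneg fun x => norm_nonneg _
  have hA1n : 0 ≤ A1 := Real.iSup_nonneg fun x => norm_nonneg _
  have hB0n : 0 ≤ B0 := Real.iSup_nonneg fun x => norm_nonneg _
  have hB1n : 0 ≤ B1 := Real.iSup_nonneg fun x => norm_nonneg _
  -- ‖ac‖ ≤ A0 and ‖bc‖ ≤ B0 via the limit x → −∞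
  have hac : ‖ac‖ ≤ A0 := by
    have key : ∀ᶠ x in atBot, ‖ac‖ ≤ A0 + Real.exp x * P0 := by
      filter_upwards [eventually_le_atBot (0:ℝ)] with x hx
      have hxa : ac = a x - Real.exp x • ainf x := by simp [ha]
      calc ‖ac‖ = ‖a x - Real.exp x • ainf x‖ := by rw [← hxa]
      _ ≤ ‖a x‖ + ‖Real.exp x • ainf x‖ := norm_sub_le _ _
      _ = ‖a x‖ + Real.exp x * ‖ainf x‖ := by rw [norm_smul, hnexp]
      _ ≤ A0 + Real.exp x * P0 := by
          gcongr
          · exact hA0 ⟨x, hx⟩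
          · exact hP0 ⟨x, hx⟩
    have lim : Tendsto (fun x : ℝ => A0 + Real.exp x * P0) atBot (nhds A0) := by
      have h := (Real.tendsto_exp_atBot.mul_const P0).const_add A0
      simpa using h
    exact ge_of_tendsto lim key
  have hbcB : ‖bc‖ ≤ B0 := by
    have key : ∀ᶠ x in atBot, ‖bc‖ ≤ B0 + Real.exp x * Q0 := by
      filter_upwards [eventually_le_atBot (0:ℝ)] with x hx
      have hxb : bc = b x - Real.exp x • binf x := by simp [hb]
      calc ‖bc‖ = ‖b x - Real.exp x • binf x‖ := by rw [← hxb]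
      _ ≤ ‖b x‖ + ‖Real.exp x • binf x‖ := norm_sub_le _ _
      _ = ‖b x‖ + Real.exp x * ‖binf x‖ := by rw [norm_smul, hnexp]
      _ ≤ B0 + Real.exp x * Q0 := by
          gcongr
          · exact hB0 ⟨x, hx⟩
          · exact hQ0 ⟨x, hx⟩
    have lim : Tendsto (fun x : ℝ => B0 + Real.exp x * Q0) atBot (nhds B0) := by
      have h := (Real.tendsto_exp_atBot.mul_const Q0).const_add B0
      simpa using h
    exact ge_of_tendsto lim key
  -- bounds on the four sup terms of the LHS
  have hS1 : (⨆ x : Iic (0:ℝ), ‖a x * b x‖) ≤ A0 * B0 := by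
    refine ciSup_le fun x => ?_
    calc ‖a x * b x‖ ≤ ‖a x‖ * ‖b x‖ := norm_mul_le _ _
    _ ≤ A0 * B0 := mul_le_mul (hA0 x) (hB0 x) (norm_nonneg _) hA0n
  have hS2 : (⨆ x : Iic (0:ℝ), ‖ab' x‖) ≤ A1 * B0 + A0 * B1 := by
    refine ciSup_le fun x => ?_
    rw [hab']
    calc ‖a' x.1 * b x + a x.1 * b' x‖ ≤ ‖a' x.1 * b x‖ + ‖a x.1 * b' x‖ := norm_add_le _ _
    _ ≤ ‖a' x.1‖ * ‖b x.1‖ + ‖a x.1‖ * ‖b' x.1‖ := add_le_add (norm_mul_le _ _) (norm_mul_le _ _)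
    _ ≤ A1 * B0 + A0 * B1 :=
        add_le_add (mul_le_mul (hA1 x) (hB0 x) (norm_nonneg _) hA1n)
          (mul_le_mul (hA0 x) (hB1 x) (norm_nonneg _) hA0n)
  have hS3 : (⨆ x : Iic (0:ℝ), ‖abinf x‖) ≤ A0 * Q0 + P0 * B0 + P0 * Q0 := by
    refine ciSup_le fun x => ?_
    rw [habinf]
    calc ‖ac * binf x + ainf x.1 * bc + Real.exp x.1 • (ainf x.1 * binf x.1)‖
        ≤ ‖ac * binf x.1‖ + ‖ainf x.1 * bc‖ + ‖Real.exp x.1 • (ainf x.1 * binf x.1)‖ :=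
          (norm_add_le _ _).trans (by gcongr; exact norm_add_le _ _)
    _ ≤ ‖ac‖ * ‖binf x.1‖ + ‖ainf x.1‖ * ‖bc‖ + Real.exp x.1 * (‖ainf x.1‖ * ‖binf x.1‖) := by
        rw [norm_smul, hnexp]
        gcongr
        · exact norm_mul_le _ _
        · exact norm_mul_le _ _
        · exact norm_mul_le _ _
    _ ≤ A0 * Q0 + P0 * B0 + 1 * (P0 * Q0) := by
        refine add_le_add (add_le_add ?_ ?_) ?_
        · exact mul_le_mul hac (hQ0 x) (norm_nonneg _) hA0n
        · exact mul_le_mul (hP0 x) hbcB (norm_nonneg _) hP0n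
        · exact mul_le_mul (he1 x) (mul_le_mul (hP0 x) (hQ0 x) (norm_nonneg _) hP0n)
            (mul_nonneg (norm_nonneg _) (norm_nonneg _)) zero_le_one
    _ = A0 * Q0 + P0 * B0 + P0 * Q0 := by ring
  have hS4 : (⨆ x : Iic (0:ℝ), ‖abinf' x‖) ≤
      A0 * Q1 + P1 * B0 + P0 * Q0 + (P1 * Q0 + P0 * Q1) := by
    refine ciSup_le fun x => ?_
    rw [habinf']
    calc ‖ac * binf' x.1 + ainf' x.1 * bc + Real.exp x.1 • (ainf x.1 * binf x.1)
          + Real.exp x.1 • (ainf' x.1 * binf x.1 + ainf x.1 * binf' x.1)‖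
        ≤ ‖ac * binf' x.1‖ + ‖ainf' x.1 * bc‖ + ‖Real.exp x.1 • (ainf x.1 * binf x.1)‖
          + ‖Real.exp x.1 • (ainf' x.1 * binf x.1 + ainf x.1 * binf' x.1)‖ := by
          refine (norm_add_le _ _).trans ?_
          gcongr
          refine (norm_add_le _ _).trans ?_
          gcongr
          exact norm_add_le _ _
    _ ≤ ‖ac‖ * ‖binf' x.1‖ + ‖ainf' x.1‖ * ‖bc‖ + Real.exp x.1 * (‖ainf x.1‖ * ‖binf x.1‖)
          + Real.exp x.1 * (‖ainf' x.1‖ * ‖binf x.1‖ + ‖ainf x.1‖ * ‖binf' x.1‖) := by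
        rw [norm_smul, norm_smul, hnexp]
        gcongr
        · exact norm_mul_le _ _
        · exact norm_mul_le _ _
        · exact norm_mul_le _ _
        · exact (norm_add_le _ _).trans (add_le_add (norm_mul_le _ _) (norm_mul_le _ _))
    _ ≤ A0 * Q1 + P1 * B0 + 1 * (P0 * Q0) + 1 * (P1 * Q0 + P0 * Q1) := by
        refine add_le_add (add_le_add (add_le_add ?_ ?_) ?_) ?_
        · exact mul_le_mul hac (hQ1 x) (norm_nonneg _) hA0n
        · exact mul_le_mul (hP1 x) hbcB (norm_nonneg _) hP1n
        · exact mul_le_mul (he1 x) (mul_le_mul (hP0 x) (hQ0 x) (norm_nonneg _) hP0n)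
            (mul_nonneg (norm_nonneg _) (norm_nonneg _)) zero_le_one
        · refine mul_le_mul (he1 x) (add_le_add
            (mul_le_mul (hP1 x) (hQ0 x) (norm_nonneg _) hP1n)
            (mul_le_mul (hP0 x) (hQ1 x) (norm_nonneg _) hP0n)) ?_ zero_le_one
          positivity
    _ = A0 * Q1 + P1 * B0 + P0 * Q0 + (P1 * Q0 + P0 * Q1) := by ring
  -- put everything together
  simp only [C1NormIic]
  nlinarith [hS1, hS2, hS3, hS4, mul_nonneg hA1n hB1n, mul_nonneg hA1n hQ0n,
    mul_nonneg hA1n hQ1n, mul_nonneg hP0n hB1n, mul_nonneg hP0n hQ1n,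
    mul_nonneg hP1n hB1n, mul_nonneg hP1n hQ0n, mul_nonneg hP1n hQ1n]
end
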